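/- Let p be a prime, R a perfect 𝔽_p-algebra, and 𝔟 ⊆ R an 𝔽_p-vector-space basis of R. Let ℤ𝔟 be the free ℤ-module on 𝔟 and consider the additive map ℤ𝔟 → ℤR/I^n induced by b ↦ [b]. Then for every n ≥ 1 the induced additive map ℤ𝔟/p^n·ℤ𝔟 → ℤR/I^n is bijective; consequently the induced map from the p-adic completion of ℤ𝔟 to C(R) is an isomorphism of topological additive groups. -/

import Mathlib

set_option synthInstance.maxHeartbeats 1000000
set_option maxHeartbeats 1000000

open MonoidAlgebra

/-- `ℤR`: the monoid algebra over `ℤ` of the multiplicative monoid `(R, ·)`. -/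
abbrev ZR (R : Type*) [CommRing R] : Type _ := MonoidAlgebra ℤ R

/-- The canonical ring homomorphism `π : ℤR → R`, `Σ n_r [r] ↦ Σ n_r r`. -/
noncomputable def piHom (R : Type*) [CommRing R] : ZR R →+* R :=
  (MonoidAlgebra.lift ℤ R R (MonoidHom.id R)).toRingHom

/-- The ideal `I = ker (π : ℤR → R)`. -/
noncomputable def Iid (R : Type*) [CommRing R] : Ideal (ZR R) := RingHom.ker (piHom R)

/-- The additive map `ℤ𝔟 → ℤR/I^n` induced by `i ↦ [b i]`, where the free `ℤ`-module `ℤ𝔟` on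
the basis `𝔟 = (b i)` is realized as `ι →₀ ℤ`. -/
noncomputable def zbMap (R : Type*) [CommRing R] {ι : Type*} (b : ι → R) (n : ℕ) :
    (ι →₀ ℤ) →+ ZR R ⧸ Iid R ^ n :=
  Finsupp.liftAddHom fun i => zmultiplesHom _ (Ideal.Quotient.mk _ (of ℤ R (b i)))

set_option linter.unusedSectionVars false

section Aux

variable {R : Type*} [CommRing R]

@[simp] lemma piHom_of (r : R) : piHom R (of ℤ R r) = r := by
  simp [piHom]

@[simp] lemma piHom_single (r : R) : piHom R (MonoidAlgebra.single r (1 : ℤ)) = r := piHom_of r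

lemma mem_Iid {x : ZR R} : x ∈ Iid R ↔ piHom R x = 0 := Iff.rfl

/-- The lift of `i ↦ [b i]` to `ℤ𝔟 → ℤR` (before passing to the quotient). -/
noncomputable def Lmap {ι : Type*} (b : ι → R) : (ι →₀ ℤ) →+ ZR R :=
  Finsupp.liftAddHom fun i => zmultiplesHom _ (of ℤ R (b i))

lemma Lmap_apply {ι : Type*} (b : ι → R) (x : ι →₀ ℤ) :
    Lmap b x = x.sum fun i m => m • of ℤ R (b i) := by
  simp only [Lmap, Finsupp.liftAddHom_apply]
  exact Finsupp.sum_congr fun i _ => by rw [zmultiplesHom_apply]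

lemma zbMap_eq {ι : Type*} (b : ι → R) (n : ℕ) (x : ι →₀ ℤ) :
    zbMap R b n x = Ideal.Quotient.mk (Iid R ^ n) (Lmap b x) := by
  rw [zbMap, Finsupp.liftAddHom_apply, Lmap_apply, Finsupp.sum, Finsupp.sum, map_sum]
  exact Finset.sum_congr rfl fun i _ => by rw [zmultiplesHom_apply, map_zsmul]

variable (p : ℕ) [hp : Fact p.Prime] [CharP R p]

lemma p_mem_Iid : (p : ZR R) ∈ Iid R := by
  rw [mem_Iid, map_natCast, CharP.cast_eq_zero]

lemma Iid_le (hperf : Function.Bijective fun x : R => x ^ p) :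
    Iid R ≤ Ideal.span {(p : ZR R)} ⊔ Iid R ^ 2 := by
  set K := Ideal.span {(p : ZR R)} ⊔ Iid R ^ 2 with hK
  set f := Ideal.Quotient.mk K with hf
  have hp0 : ((p : ℕ) : ZR R ⧸ K) = 0 := by
    have : f ((p : ℕ) : ZR R) = 0 := Ideal.Quotient.eq_zero_iff_mem.2
      (Ideal.mem_sup_left (Ideal.subset_span rfl))
    simpa using this
  have hsq : ∀ w : ZR R, w ∈ Iid R → f w ^ 2 = 0 := by
    intro w hw
    rw [← map_pow]
    exact Ideal.Quotient.eq_zero_iff_mem.2 (Ideal.mem_sup_right (Ideal.pow_mem_pow hw 2))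
  have key2 : ∀ a b : R, f (of ℤ R a + of ℤ R b - of ℤ R (a + b)) = 0 := by
    intro a b
    obtain ⟨u, hu⟩ := hperf.2 a
    obtain ⟨v, hv⟩ := hperf.2 b
    have hu : u ^ p = a := hu
    have hv : v ^ p = b := hv
    have h1 : of ℤ R a = of ℤ R u ^ p := by rw [← map_pow, hu]
    have h2 : of ℤ R b = of ℤ R v ^ p := by rw [← map_pow, hv]
    have h3 : of ℤ R (a + b) = of ℤ R (u + v) ^ p := by
      rw [← map_pow, ← hu, ← hv, ← add_pow_char]
    set d : ZR R := of ℤ R u + of ℤ R v - of ℤ R (u + v) with hd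
    have hdI : d ∈ Iid R := by
      rw [hd, mem_Iid, map_sub, map_add, piHom_of, piHom_of, piHom_of, sub_self]
    have hd2 : f d ^ 2 = 0 := hsq d hdI
    have hdp : f d ^ p = 0 := by
      have h2p : p = 2 + (p - 2) := by have := hp.out.two_le; omega
      rw [h2p, pow_add, hd2, zero_mul]
    obtain ⟨s, hs⟩ := (Commute.all (f (of ℤ R u)) (f (of ℤ R v))).exists_add_pow_prime_eq hp.out
    obtain ⟨t, ht⟩ := (Commute.all (f (of ℤ R u) + f (of ℤ R v)) (-f d)).exists_add_pow_prime_eq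
      hp.out
    have hβ : f (of ℤ R (u + v)) = f (of ℤ R u) + f (of ℤ R v) + -f d := by
      rw [hd, map_sub f, map_add f]; ring
    have hnd : (-f d) ^ p = 0 := by
      rw [show (-f d) = (-1) * f d by ring, mul_pow, hdp, mul_zero]
    calc f (of ℤ R a + of ℤ R b - of ℤ R (a + b))
        = f (of ℤ R u) ^ p + f (of ℤ R v) ^ p - f (of ℤ R (u + v)) ^ p := by
          rw [h1, h2, h3, map_sub f, map_add f, map_pow f, map_pow f, map_pow f]
      _ = 0 := by rw [hβ, ht, hs, hp0, hnd]; ring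
  intro z hz
  have hof0 : f (of ℤ R 0) = 0 := by
    have h0I : of ℤ R (0 : R) ∈ Iid R := by rw [mem_Iid, piHom_of]
    have hmul : of ℤ R (0 : R) * of ℤ R 0 = of ℤ R 0 := by rw [← map_mul, mul_zero]
    have : of ℤ R (0 : R) ∈ Iid R ^ 2 := by
      rw [← hmul, pow_two]; exact Ideal.mul_mem_mul h0I h0I
    exact Ideal.Quotient.eq_zero_iff_mem.2 (Ideal.mem_sup_right this)
  have hofadd : ∀ a b : R, f (of ℤ R (a + b)) = f (of ℤ R a) + f (of ℤ R b) := by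
    intro a b
    have := key2 a b
    rw [map_sub, map_add, sub_eq_zero] at this
    exact this.symm
  have hofneg : ∀ a : R, f (of ℤ R (-a)) = -f (of ℤ R a) := by
    intro a
    have h := hofadd a (-a)
    rw [add_neg_cancel, hof0] at h
    linear_combination -h
  have hsmul : ∀ (m : ℤ) (r : R), f (m • of ℤ R r) = f (of ℤ R (m • r)) := by
    intro m r
    induction m using Int.induction_on with
    | zero => simpa using hof0.symm
    | succ k ih =>
      rw [add_smul, one_smul, map_add f, ih, add_smul, one_smul, hofadd]
    | pred k ih =>
      rw [sub_smul, one_smul, map_sub f, ih, sub_smul, one_smul,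
        show (-(k : ℤ)) • r - r = (-(k : ℤ)) • r + (-r) by ring, hofadd, hofneg]
      ring
  have hall : ∀ z : ZR R, f z = f (of ℤ R (piHom R z)) := by
    intro z
    induction z using MonoidAlgebra.induction_on with
    | of g => simp
    | add a b ha hb => rw [map_add, ha, hb, map_add, hofadd]
    | smul m w hw =>
      rw [map_zsmul, hw, ← map_zsmul f, hsmul, map_zsmul (piHom R)]
  have hz0 : piHom R z = 0 := hz
  have h := hall z
  rw [hz0, hof0] at h
  exact Ideal.Quotient.eq_zero_iff_mem.1 h

lemma Iid_pow_le (hperf : Function.Bijective fun x : R => x ^ p) (n : ℕ) :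
    Iid R ^ n ≤ Ideal.span {(p : ZR R) ^ n} ⊔ Iid R ^ (n + 1) := by
  induction n with
  | zero => simp [Ideal.span_singleton_one]
  | succ n ih =>
    have h1 : Iid R ^ (n + 1) = Iid R ^ n * Iid R := pow_succ _ _
    rw [h1]
    calc Iid R ^ n * Iid R
        ≤ (Ideal.span {(p : ZR R) ^ n} ⊔ Iid R ^ (n + 1)) * Iid R := Ideal.mul_mono_left ih
      _ = Ideal.span {(p : ZR R) ^ n} * Iid R ⊔ Iid R ^ (n + 1) * Iid R := Ideal.sup_mul _ _ _
      _ ≤ Ideal.span {(p : ZR R) ^ (n + 1)} ⊔ Iid R ^ (n + 2) := by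
          apply sup_le
          · calc Ideal.span {(p : ZR R) ^ n} * Iid R
                ≤ Ideal.span {(p : ZR R) ^ n} * (Ideal.span {(p : ZR R)} ⊔ Iid R ^ 2) :=
                  Ideal.mul_mono_right (Iid_le p hperf)
              _ = Ideal.span {(p : ZR R) ^ n} * Ideal.span {(p : ZR R)} ⊔
                  Ideal.span {(p : ZR R) ^ n} * Iid R ^ 2 := Ideal.mul_sup _ _ _
              _ ≤ Ideal.span {(p : ZR R) ^ (n + 1)} ⊔ Iid R ^ (n + 2) := by
                  apply sup_le_sup
                  · rw [Ideal.span_singleton_mul_span_singleton, ← pow_succ]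
                  · calc Ideal.span {(p : ZR R) ^ n} * Iid R ^ 2
                        ≤ Iid R ^ n * Iid R ^ 2 := Ideal.mul_mono_left (by
                          rw [Ideal.span_le, Set.singleton_subset_iff]
                          exact Ideal.pow_mem_pow (p_mem_Iid p) n)
                      _ = Iid R ^ (n + 2) := by rw [← pow_add]
          · apply le_sup_of_le_right
            rw [← pow_succ]

variable {ι : Type*} [Algebra (ZMod p) R]

lemma approx1 (b : Module.Basis ι (ZMod p) R) (z : ZR R) :
    ∃ x : ι →₀ ℤ, z - Lmap (fun i => b i) x ∈ Iid R := by
  classical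
  set r := piHom R z with hr
  set c := b.repr r with hc
  refine ⟨c.mapRange (fun a => (a.val : ℤ)) (by simp), ?_⟩
  rw [mem_Iid, map_sub, sub_eq_zero]
  rw [Lmap_apply, map_finsuppSum]
  rw [Finsupp.sum_mapRange_index (by simp)]
  have step : ∀ i, piHom R (((((c i).val : ℤ)) • of ℤ R (b i))) = c i • b i := by
    intro i
    rw [map_zsmul, piHom_of, zsmul_eq_mul, Int.cast_natCast, ZMod.natCast_val,
      Algebra.smul_def]
    congr 1
    have : algebraMap (ZMod p) R = ZMod.castHom (dvd_refl p) R := RingHom.ext_zmod _ _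
    rw [this, ZMod.castHom_apply]
  have hcongr : (c.sum fun i a => piHom R (((a.val : ℤ)) • of ℤ R (b i)))
      = c.sum fun i a => a • (b i : R) :=
    Finsupp.sum_congr fun i _ => step i
  rw [hcongr]
  have h := b.linearCombination_repr r
  rw [Finsupp.linearCombination_apply] at h
  rw [← hc] at h
  rw [hr] at h
  exact h.symm

lemma approxN (hperf : Function.Bijective fun x : R => x ^ p) (b : Module.Basis ι (ZMod p) R)
    (n : ℕ) (z : ZR R) :
    ∃ x : ι →₀ ℤ, z - Lmap (fun i => b i) x ∈ Iid R ^ n := by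
  induction n with
  | zero => exact ⟨0, by simp⟩
  | succ n ih =>
    obtain ⟨x, hx⟩ := ih
    have hw : z - Lmap (fun i => b i) x ∈ Ideal.span {(p : ZR R) ^ n} ⊔ Iid R ^ (n + 1) :=
      Iid_pow_le p hperf n hx
    rw [Submodule.mem_sup] at hw
    obtain ⟨a, ha, v, hv, hav⟩ := hw
    rw [Ideal.mem_span_singleton] at ha
    obtain ⟨u, hu⟩ := ha
    obtain ⟨x₁, hx₁⟩ := approx1 p b u
    refine ⟨x + (p : ℤ) ^ n • x₁, ?_⟩
    rw [map_add, map_zsmul]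
    have hcast : ((p : ℤ) ^ n) • Lmap (fun i => b i) x₁
        = (p : ZR R) ^ n * Lmap (fun i => b i) x₁ := by
      rw [zsmul_eq_mul]
      push_cast
      ring
    have key : z - (Lmap (fun i => b i) x + ((p : ℤ) ^ n) • Lmap (fun i => b i) x₁)
        = (p : ZR R) ^ n * (u - Lmap (fun i => b i) x₁) + v := by
      rw [hcast]
      linear_combination hav.symm + hu
    rw [key]
    exact Ideal.add_mem _ (by
      rw [pow_succ]
      exact Ideal.mul_mem_mul (Ideal.pow_mem_pow (p_mem_Iid p) n) hx₁) hv

end Aux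

section Witt

open WittVector

variable {R : Type*} [CommRing R] (p : ℕ) [hp : Fact p.Prime] [CharP R p]

/-- The ring homomorphism `Θ : ℤR → W(R)`, `[r] ↦ τ(r)` (Teichmüller). -/
noncomputable def thetaHom : ZR R →+* WittVector p R :=
  ((MonoidAlgebra.lift ℤ (WittVector p R) R) (WittVector.teichmuller p)).toRingHom

@[simp] lemma thetaHom_of (r : R) : thetaHom p (of ℤ R r) = WittVector.teichmuller p r := by
  simp [thetaHom]

@[simp] lemma thetaHom_single (r : R) :
    thetaHom p (MonoidAlgebra.single r (1 : ℤ)) = WittVector.teichmuller p r := thetaHom_of p r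

lemma exists_verschiebung {x : WittVector p R} (h : x.coeff 0 = 0) :
    ∃ y : WittVector p R, WittVector.verschiebung y = x := by
  refine ⟨WittVector.mk p (fun n => x.coeff (n + 1)), ?_⟩
  ext n
  cases n with
  | zero => rw [WittVector.verschiebung_coeff_zero, h]
  | succ n => rw [WittVector.verschiebung_coeff_succ]; simp [WittVector.coeff_mk]

lemma verschiebung_inj {x y : WittVector p R}
    (h : WittVector.verschiebung x = WittVector.verschiebung y) : x = y := by
  ext n
  have := congrArg (fun z : WittVector p R => z.coeff (n + 1)) h
  simpa [WittVector.verschiebung_coeff_succ] using this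

lemma perfectRingOf (hperf : Function.Bijective fun x : R => x ^ p) : PerfectRing R p := by
  constructor
  have h : ⇑(frobenius R p) = fun x : R => x ^ p := by
    funext x; exact frobenius_def p x
  exact hperf

lemma witt_ptorsionfree (hperf : Function.Bijective fun x : R => x ^ p) {x : WittVector p R}
    (h : (p : WittVector p R) * x = 0) : x = 0 := by
  haveI := perfectRingOf p hperf
  have h1 : WittVector.verschiebung (WittVector.frobenius x) = x * p :=
    WittVector.verschiebung_frobenius x
  have h2 : WittVector.verschiebung (WittVector.frobenius x)
      = WittVector.verschiebung (0 : WittVector p R) := by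
    rw [map_zero, h1, mul_comm, h]
  have h4 := verschiebung_inj p h2
  have h5 : WittVector.frobenius (x : WittVector p R)
      = WittVector.frobenius (0 : WittVector p R) := by rw [h4, map_zero]
  exact (WittVector.frobenius_bijective p R).1 h5

lemma ghost0_theta (z : ZR R) :
    WittVector.ghostComponent 0 (thetaHom p z) = piHom R z := by
  have h : (WittVector.ghostComponent (p := p) (R := R) 0).comp (thetaHom p) = piHom R := by
    apply MonoidAlgebra.ringHom_ext
    · intro m
      simp only [RingHom.coe_comp, Function.comp_apply]
      have hsm : ((m : ℤ) : ZR R) = MonoidAlgebra.single (1 : R) m := by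
        rw [MonoidAlgebra.intCast_def, Int.cast_id]
      rw [← hsm, map_intCast, map_intCast, map_intCast]
    · intro a
      simp only [RingHom.coe_comp, Function.comp_apply, thetaHom_single, piHom_single]
      rw [WittVector.ghostComponent_teichmuller]
      simp
  exact DFunLike.congr_fun h z

lemma theta_Iid (hperf : Function.Bijective fun x : R => x ^ p) {z : ZR R} (hz : z ∈ Iid R) :
    ∃ w, thetaHom p z = (p : WittVector p R) * w := by
  haveI := perfectRingOf p hperf
  have h0 : (thetaHom p z).coeff 0 = 0 := by
    have hg := ghost0_theta p z
    rw [mem_Iid.1 hz] at hg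
    have : WittVector.ghostComponent (p := p) 0 (thetaHom p z)
        = (thetaHom p z).coeff 0 := by
      simp [WittVector.ghostComponent_apply, wittPolynomial_zero]
    rw [this] at hg
    exact hg
  obtain ⟨y, hy⟩ := exists_verschiebung p h0
  obtain ⟨w, hw⟩ := (WittVector.frobenius_bijective p R).2 y
  refine ⟨w, ?_⟩
  rw [← hy, ← hw, WittVector.verschiebung_frobenius, mul_comm]

lemma theta_Iid_pow (hperf : Function.Bijective fun x : R => x ^ p) (n : ℕ) {z : ZR R}
    (hz : z ∈ Iid R ^ n) :
    ∃ w, thetaHom p z = (p : WittVector p R) ^ n * w := by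
  have h1 : Ideal.map (thetaHom p) (Iid R) ≤ Ideal.span {(p : WittVector p R)} := by
    rw [Ideal.map_le_iff_le_comap]
    intro x hx
    obtain ⟨w, hw⟩ := theta_Iid p hperf hx
    exact Ideal.mem_span_singleton.2 ⟨w, hw⟩
  have h2 : thetaHom p z ∈ Ideal.map (thetaHom p) (Iid R ^ n) := Ideal.mem_map_of_mem _ hz
  rw [Ideal.map_pow] at h2
  have h3 : Ideal.map (thetaHom p) (Iid R) ^ n ≤ Ideal.span {(p : WittVector p R)} ^ n :=
    Ideal.pow_right_mono h1 n
  have h4 := h3 h2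
  rw [Ideal.span_singleton_pow, Ideal.mem_span_singleton] at h4
  exact h4

variable {ι : Type*} [Algebra (ZMod p) R]

lemma witt_kernel (hperf : Function.Bijective fun x : R => x ^ p) (b : Module.Basis ι (ZMod p) R)
    (n : ℕ) :
    ∀ (x : ι →₀ ℤ) (w : WittVector p R),
      thetaHom p (Lmap (fun i => b i) x) = (p : WittVector p R) ^ n * w →
      ∃ y : ι →₀ ℤ, x = (p : ℤ) ^ n • y := by
  induction n with
  | zero => exact fun x w _ => ⟨x, by simp⟩
  | succ n ih =>
    intro x w hw
    -- coefficients are divisible by p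
    have h0 : (x.sum fun i m => (m : R) * b i) = 0 := by
      have hg := congrArg (WittVector.ghostComponent (p := p) 0) hw
      rw [ghost0_theta, map_mul, map_pow] at hg
      have hp0 : WittVector.ghostComponent (p := p) (R := R) 0 ((p : WittVector p R)) = 0 := by
        rw [map_natCast, CharP.cast_eq_zero]
      rw [hp0, zero_pow (Nat.succ_ne_zero n), zero_mul] at hg
      rw [Lmap_apply, map_finsuppSum] at hg
      rw [← hg]
      exact Finsupp.sum_congr fun i _ => by rw [map_zsmul, piHom_of, zsmul_eq_mul]
    have hdvd : ∀ i, (p : ℤ) ∣ x i := by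
      intro i
      have hc : Finsupp.linearCombination (ZMod p) (fun i => (b i : R))
          (x.mapRange (fun m : ℤ => (m : ZMod p)) (by simp)) = 0 := by
        rw [Finsupp.linearCombination_apply, Finsupp.sum_mapRange_index (by simp)]
        rw [← h0]
        refine Finsupp.sum_congr fun i _ => ?_
        rw [Algebra.smul_def, map_intCast]
      have hlin := b.linearIndependent
      rw [linearIndependent_iff] at hlin
      have hc0 := hlin _ hc
      have := DFunLike.congr_fun hc0 i
      rw [Finsupp.mapRange_apply] at this
      exact (ZMod.intCast_zmod_eq_zero_iff_dvd _ _).1 this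
    set y₀ : ι →₀ ℤ := x.mapRange (fun m => m / (p : ℤ)) (by simp) with hy₀
    have hxy : x = (p : ℤ) • y₀ := by
      ext i
      rw [Finsupp.smul_apply, hy₀, Finsupp.mapRange_apply, smul_eq_mul,
        Int.mul_ediv_cancel' (hdvd i)]
    have hMy : (p : WittVector p R) * thetaHom p (Lmap (fun i => b i) y₀)
        = (p : WittVector p R) * ((p : WittVector p R) ^ n * w) := by
      have h1 : thetaHom p (Lmap (fun i => b i) x)
          = (p : WittVector p R) * thetaHom p (Lmap (fun i => b i) y₀) := by
        rw [hxy, map_zsmul, map_zsmul, zsmul_eq_mul]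
        push_cast
        ring
      rw [← h1, hw]
      ring
    have hcancel : thetaHom p (Lmap (fun i => b i) y₀) = (p : WittVector p R) ^ n * w := by
      have hz : (p : WittVector p R) *
          (thetaHom p (Lmap (fun i => b i) y₀) - (p : WittVector p R) ^ n * w) = 0 := by
        rw [mul_sub, hMy, sub_self]
      have := witt_ptorsionfree p hperf hz
      linear_combination this
    obtain ⟨y, hy⟩ := ih y₀ w hcancel
    refine ⟨y, ?_⟩
    rw [hxy, hy, smul_smul, pow_succ, mul_comm]

end Witt

/-- Let `p` be a prime, `R` a perfect `𝔽_p`-algebra and `𝔟` an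
`𝔽_p`-vector-space basis of `R`.  Then for every `n ≥ 1` the additive map `ℤ𝔟 → ℤR/I^n`
induced by `b ↦ [b]` is surjective with kernel `p^n·ℤ𝔟`; i.e. the induced additive map
`ℤ𝔟/p^n·ℤ𝔟 → ℤR/I^n` is bijective (consequently, the induced map from the `p`-adic
completion of `ℤ𝔟` to `C(R)` is a topological isomorphism of additive groups). -/
theorem statement10 (p : ℕ) [Fact p.Prime] (R : Type*) [CommRing R] [CharP R p]
    (hperf : Function.Bijective fun x : R => x ^ p)
    [Algebra (ZMod p) R] (ι : Type*) (b : Module.Basis ι (ZMod p) R) (n : ℕ) (hn : 1 ≤ n) :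
    Function.Surjective (zbMap R (fun i => b i) n) ∧
    ∀ x : ι →₀ ℤ, zbMap R (fun i => b i) n x = 0 ↔ ∃ y : ι →₀ ℤ, x = (p : ℤ) ^ n • y := by
  constructor
  · intro z
    obtain ⟨z₀, rfl⟩ := Ideal.Quotient.mk_surjective z
    obtain ⟨x, hx⟩ := approxN p hperf b n z₀
    refine ⟨x, ?_⟩
    rw [zbMap_eq]
    rw [Ideal.Quotient.mk_eq_mk_iff_sub_mem]
    simpa using (Iid R ^ n).neg_mem hx
  · intro x
    constructor
    · intro hx
      rw [zbMap_eq, Ideal.Quotient.eq_zero_iff_mem] at hx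
      obtain ⟨w, hw⟩ := theta_Iid_pow p hperf n hx
      exact witt_kernel p hperf b n x w hw
    · rintro ⟨y, rfl⟩
      rw [zbMap_eq, Ideal.Quotient.eq_zero_iff_mem]
      have h : Lmap (fun i => b i) ((p : ℤ) ^ n • y)
          = (p : ZR R) ^ n * Lmap (fun i => b i) y := by
        rw [map_zsmul, zsmul_eq_mul]
        push_cast
        ring
      rw [h]
      exact Ideal.mul_mem_right _ _ (Ideal.pow_mem_pow (p_mem_Iid p) n)
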